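/- For every fixed γ > 0, the dimensionless energy-to-pressure ratio of the gas with internal structure recovers the monatomic (Synge) value as the parameter a tends to −1 from above: lim_{a→−1⁺} r(γ, a) = γ · K₃(γ)/K₂(γ) − 1. -/

import Mathlib

open MeasureTheory Real Filter Set
open Topology

/-- Modified Bessel function of the second kind, integral representation. -/
noncomputable def besselK (n : ℕ) (x : ℝ) : ℝ :=
  ∫ t in Set.Ioi (0 : ℝ), Real.exp (-x * Real.cosh t) * Real.cosh (n * t)

/-- Dimensionless energy-to-pressure ratio `r(γ, a) = e/p` of a relativistic
gas with internal structure, state-density measure `φ(I) = I^a`. -/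
noncomputable def rRatio (γ a : ℝ) : ℝ :=
  (∫ s in Set.Ioi γ, (besselK 3 s - besselK 2 s / s) * (s - γ) ^ a) /
  (∫ s in Set.Ioi γ, (besselK 2 s / s) * (s - γ) ^ a)


/-- Pointwise exponential bound on the Bessel integrand. -/
lemma besselK_integrand_le (n : ℕ) {c t : ℝ} (hc : 0 < c) (ht : 0 ≤ t) :
    Real.exp (-c * Real.cosh t) * Real.cosh (n * t) ≤
      Real.exp (2 * ((n : ℝ) + 1) ^ 2 / c) * Real.exp (-t) := by
  have hnt : (0:ℝ) ≤ (n : ℝ) * t := by positivity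
  have h1 : Real.cosh ((n:ℝ) * t) ≤ Real.exp ((n:ℝ) * t) := by
    rw [Real.cosh_eq]
    nlinarith [Real.exp_le_exp.2 (neg_le_self hnt), Real.exp_pos (-((n:ℝ)*t))]
  have h2 : (t / 2 + 1) ^ 2 ≤ Real.exp t := by
    have h := Real.add_one_le_exp (t / 2)
    calc (t/2+1)^2 ≤ (Real.exp (t/2))^2 := by nlinarith [Real.exp_pos (t/2)]
      _ = Real.exp t := by rw [sq, ← Real.exp_add]; ring_nf
  have h3 : Real.exp t / 2 ≤ Real.cosh t := by
    rw [Real.cosh_eq]; nlinarith [Real.exp_pos (-t)]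
  have hcosh : t ^ 2 / 8 ≤ Real.cosh t := by nlinarith
  have key : -c * Real.cosh t + (n:ℝ) * t ≤ 2 * ((n:ℝ)+1)^2 / c + -t := by
    have hq : ((n:ℝ)+1) * t ≤ 2 * ((n:ℝ)+1)^2 / c + c * (t^2/8) := by
      rw [div_add' _ _ _ hc.ne', le_div_iff₀ hc]
      nlinarith [sq_nonneg (c * t - 4 * ((n:ℝ)+1))]
    nlinarith [mul_le_mul_of_nonneg_left hcosh hc.le]
  calc Real.exp (-c * Real.cosh t) * Real.cosh ((n:ℝ) * t)
      ≤ Real.exp (-c * Real.cosh t) * Real.exp ((n:ℝ) * t) := by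
        exact mul_le_mul_of_nonneg_left h1 (Real.exp_pos _).le
    _ = Real.exp (-c * Real.cosh t + (n:ℝ) * t) := (Real.exp_add _ _).symm
    _ ≤ Real.exp (2 * ((n:ℝ)+1)^2 / c + -t) := Real.exp_le_exp.2 key
    _ = Real.exp (2 * ((n:ℝ)+1)^2 / c) * Real.exp (-t) := Real.exp_add _ _

lemma besselK_integrand_integrableOn (n : ℕ) {c : ℝ} (hc : 0 < c) :
    IntegrableOn (fun t => Real.exp (-c * Real.cosh t) * Real.cosh (n * t)) (Ioi 0) := by
  have hbase : IntegrableOn (fun t : ℝ => Real.exp (-t)) (Ioi 0) := by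
    simpa using exp_neg_integrableOn_Ioi 0 one_pos
  refine Integrable.mono' (hbase.const_mul (Real.exp (2 * ((n : ℝ) + 1) ^ 2 / c)))
    ?_ ?_
  · exact (Continuous.aestronglyMeasurable (by continuity))
  · filter_upwards [ae_restrict_mem measurableSet_Ioi] with t ht
    rw [Real.norm_eq_abs, abs_of_nonneg (by positivity)]
    exact besselK_integrand_le n hc (le_of_lt ht)

lemma besselK_pos (n : ℕ) {x : ℝ} (hx : 0 < x) : 0 < besselK n x := by
  rw [besselK]
  rw [setIntegral_pos_iff_support_of_nonneg_ae
      (Filter.Eventually.of_forall fun t => by positivity)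
      (besselK_integrand_integrableOn n hx)]
  have : (Function.support fun t => Real.exp (-x * Real.cosh t) * Real.cosh (n * t)) = univ := by
    ext t; simp [Function.support]; positivity
  rw [this, univ_inter]
  simp [Real.volume_Ioi]

lemma besselK_le_exp_mul (n : ℕ) {γ s : ℝ} (hγ : 0 < γ) (hs : γ ≤ s) :
    besselK n s ≤ Real.exp (γ - s) * besselK n γ := by
  have hs0 : 0 < s := lt_of_lt_of_le hγ hs
  rw [besselK, besselK, ← integral_const_mul]
  refine setIntegral_mono_on (besselK_integrand_integrableOn n hs0)
    ((besselK_integrand_integrableOn n hγ).const_mul _) measurableSet_Ioi ?_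
  intro t ht
  have hcosh : 1 ≤ Real.cosh t := Real.one_le_cosh t
  have hc : 0 < Real.cosh (n * t) := (Real.cosh_pos _)
  rw [← mul_assoc, ← Real.exp_add]
  refine mul_le_mul_of_nonneg_right (Real.exp_le_exp.2 ?_) hc.le
  nlinarith
lemma besselK_nonneg (n : ℕ) {x : ℝ} (hx : 0 < x) : 0 ≤ besselK n x := (besselK_pos n hx).le

lemma exp_neg_int : IntegrableOn (fun t : ℝ => Real.exp (-t)) (Ioi 0) := by
  simpa using exp_neg_integrableOn_Ioi (0:ℝ) one_pos

lemma besselK_continuousAt (n : ℕ) {x : ℝ} (hx : 0 < x) : ContinuousAt (besselK n) x := by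
  unfold besselK
  have hbi : Integrable (fun t : ℝ =>
      Real.exp (2 * ((n : ℝ) + 1) ^ 2 / (x / 2)) * Real.exp (-t))
      (volume.restrict (Ioi 0)) := exp_neg_int.const_mul _
  refine continuousAt_of_dominated ?_ ?_ hbi ?_
  · exact Filter.Eventually.of_forall fun y =>
      (Continuous.aestronglyMeasurable (by continuity))
  · have hmem : Ioi (x / 2) ∈ 𝓝 x := Ioi_mem_nhds (by linarith)
    filter_upwards [hmem] with y hy
    filter_upwards [ae_restrict_mem measurableSet_Ioi] with t ht
    rw [Real.norm_eq_abs, abs_of_nonneg (by positivity)]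
    have h1 : Real.exp (-y * Real.cosh t) * Real.cosh (n * t) ≤
        Real.exp (-(x/2) * Real.cosh t) * Real.cosh (n * t) := by
      have : -y * Real.cosh t ≤ -(x/2) * Real.cosh t := by
        have := Real.one_le_cosh t
        nlinarith [mem_Ioi.1 hy]
      exact mul_le_mul_of_nonneg_right (Real.exp_le_exp.2 this) (Real.cosh_pos _).le
    exact h1.trans (besselK_integrand_le n (by linarith) (le_of_lt ht))
  · exact Filter.Eventually.of_forall fun t => by fun_prop


lemma integral_Ioi_shift (f : ℝ → ℝ) (γ : ℝ) :
    ∫ s in Ioi γ, f s = ∫ x in Ioi (0:ℝ), f (x + γ) := by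
  have hemb : MeasurableEmbedding (fun x : ℝ => x + γ) :=
    (MeasurableEquiv.addRight γ).measurableEmbedding
  have : ∫ s in Ioi γ, f s ∂(Measure.map (fun x : ℝ => x + γ) volume) =
      ∫ x in (fun x : ℝ => x + γ) ⁻¹' (Ioi γ), f (x + γ) := hemb.setIntegral_map f _
  rw [map_add_right_eq_self volume γ] at this
  rw [this]
  congr 1
  ext x; simp

/-- The key concentration lemma. -/
lemma tendsto_key {γ C : ℝ} (hγ : 0 < γ) {h : ℝ → ℝ}
    (hcont : ∀ x, γ ≤ x → ContinuousAt h x)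
    (hbound : ∀ s, γ ≤ s → |h s| ≤ C * Real.exp (-s)) :
    Tendsto (fun a : ℝ => (a + 1) * ∫ s in Ioi γ, h s * (s - γ) ^ a)
      (𝓝[>] (-1)) (𝓝 (h γ)) := by
  have hC : 0 ≤ C := by
    have h1 := hbound γ le_rfl
    nlinarith [abs_nonneg (h γ), Real.exp_pos (-γ)]
  set F : ℝ → ℝ → ℝ := fun a x => h (x ^ (1 / (a + 1)) + γ) with hF
  -- Step B : eventual equality
  have heq : ∀ a : ℝ, -1 < a →
      (a + 1) * ∫ s in Ioi γ, h s * (s - γ) ^ a = ∫ x in Ioi (0:ℝ), F a x := by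
    intro a ha
    have ha1 : 0 < a + 1 := by linarith
    set p : ℝ := 1 / (a + 1) with hp
    have hp0 : 0 < p := by positivity
    have step1 : ∫ s in Ioi γ, h s * (s - γ) ^ a
        = ∫ u in Ioi (0:ℝ), h (u + γ) * u ^ a := by
      rw [integral_Ioi_shift (fun s => h s * (s - γ) ^ a) γ]
      simp
    have step2 : ∫ x in Ioi (0:ℝ), (|p| * x ^ (p - 1)) • (h (x ^ p + γ) * (x ^ p) ^ a)
        = ∫ u in Ioi (0:ℝ), h (u + γ) * u ^ a :=
      integral_comp_rpow_Ioi (fun u => h (u + γ) * u ^ a) hp0.ne'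
    have step3 : ∀ x ∈ Ioi (0:ℝ),
        (|p| * x ^ (p - 1)) • (h (x ^ p + γ) * (x ^ p) ^ a) = p * F a x := by
      intro x hx
      have hx0 : (0:ℝ) < x := hx
      have hxp : x ^ (p * a) = (x ^ p) ^ a := Real.rpow_mul hx0.le p a
      have hee : x ^ (p - 1) * x ^ (p * a) = 1 := by
        rw [← Real.rpow_add hx0]
        have he : p - 1 + p * a = 0 := by
          rw [hp]; field_simp; ring
        rw [he, Real.rpow_zero]
      rw [smul_eq_mul, abs_of_pos hp0, ← hxp,
        show p * x ^ (p - 1) * (h (x ^ p + γ) * x ^ (p * a))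
          = p * h (x ^ p + γ) * (x ^ (p - 1) * x ^ (p * a)) from by ring,
        hee, mul_one]
    have step4 : ∫ x in Ioi (0:ℝ), (|p| * x ^ (p - 1)) • (h (x ^ p + γ) * (x ^ p) ^ a)
        = p * ∫ x in Ioi (0:ℝ), F a x := by
      rw [setIntegral_congr_fun measurableSet_Ioi step3, integral_const_mul]
    have hpa : (a + 1) * p = 1 := by rw [hp]; field_simp
    calc (a + 1) * ∫ s in Ioi γ, h s * (s - γ) ^ a
        = (a + 1) * (p * ∫ x in Ioi (0:ℝ), F a x) := by rw [step1, ← step2, step4]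
      _ = ∫ x in Ioi (0:ℝ), F a x := by rw [← mul_assoc, hpa, one_mul]
  -- Step A : dominated convergence
  have hmemIoo : Ioo (-1:ℝ) 0 ∈ 𝓝[>] (-1:ℝ) :=
    Ioo_mem_nhdsGT_of_mem ⟨le_rfl, by norm_num⟩
  have hptend : Tendsto (fun a : ℝ => 1 / (a + 1)) (𝓝[>] (-1)) atTop := by
    have h1 : Tendsto (fun a : ℝ => a + 1) (𝓝[>] (-1)) (𝓝[>] 0) := by
      apply tendsto_nhdsWithin_of_tendsto_nhds_of_eventually_within
      · have : Tendsto (fun a : ℝ => a + 1) (𝓝 (-1)) (𝓝 ((-1) + 1)) :=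
          (continuous_id.add continuous_const).tendsto _
        simpa using this.mono_left nhdsWithin_le_nhds
      · filter_upwards [self_mem_nhdsWithin] with a ha
        exact by simpa using by linarith [mem_Ioi.1 ha]
    simpa [one_div, Function.comp_def] using tendsto_inv_nhdsGT_zero.comp h1
  set f : ℝ → ℝ := (Ioo (0:ℝ) 1).indicator (fun _ => h γ) with hf
  have hintf : ∫ x in Ioi (0:ℝ), f x = h γ := by
    rw [hf, setIntegral_indicator measurableSet_Ioo,
      show Ioi (0:ℝ) ∩ Ioo 0 1 = Ioo 0 1 by
        rw [inter_eq_right]; exact Ioo_subset_Ioi_self]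
    simp [Real.volume_Ioo]
  have htendF : Tendsto (fun a => ∫ x in Ioi (0:ℝ), F a x) (𝓝[>] (-1))
      (𝓝 (h γ)) := by
    rw [← hintf]
    apply tendsto_integral_filter_of_dominated_convergence
      (bound := fun x => C * Real.exp (1 - γ) * Real.exp (-x))
    · -- measurability
      filter_upwards [self_mem_nhdsWithin] with a ha
      have ha1 : 0 < a + 1 := by have := mem_Ioi.1 ha; linarith
      apply ContinuousOn.aestronglyMeasurable _ measurableSet_Ioi
      intro x hx
      have hx0 : (0:ℝ) < x := hx
      have hcx : ContinuousAt (fun x : ℝ => x ^ (1 / (a + 1)) + γ) x :=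
        (Real.continuousAt_rpow_const x _ (Or.inl hx0.ne')).add continuousAt_const
      have hval : γ ≤ x ^ (1 / (a + 1)) + γ := by
        nlinarith [Real.rpow_pos_of_pos hx0 (1 / (a + 1))]
      have hcc : ContinuousAt (fun y : ℝ => h (y ^ (1 / (a + 1)) + γ)) x :=
        ContinuousAt.comp (hcont _ hval) hcx
      exact hcc.continuousWithinAt
    · -- bound
      filter_upwards [hmemIoo] with a ha
      filter_upwards [ae_restrict_mem measurableSet_Ioi] with x hx
      obtain ⟨ha1, ha2⟩ := ha
      have hx0 : (0:ℝ) < x := hx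
      set p : ℝ := 1 / (a + 1) with hp
      have hp1 : 1 ≤ p := by
        rw [hp, le_div_iff₀ (by linarith)]; linarith
      have hxp0 : 0 < x ^ p := Real.rpow_pos_of_pos hx0 p
      have hs : γ ≤ x ^ p + γ := by linarith
      have hb := hbound _ hs
      have hxe : x - 1 ≤ x ^ p := by
        rcases le_or_gt x 1 with hx1 | hx1
        · linarith
        · have h1 : x ^ (1:ℝ) ≤ x ^ p := Real.rpow_le_rpow_of_exponent_le hx1.le hp1
          rw [Real.rpow_one] at h1
          linarith
      have : C * Real.exp (-(x ^ p + γ)) ≤ C * Real.exp (1 - γ) * Real.exp (-x) := by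
        rw [mul_assoc, ← Real.exp_add]
        apply mul_le_mul_of_nonneg_left _ hC
        apply Real.exp_le_exp.2
        linarith
      calc ‖F a x‖ = |h (x ^ p + γ)| := by rw [Real.norm_eq_abs]
        _ ≤ C * Real.exp (-(x ^ p + γ)) := hb
        _ ≤ C * Real.exp (1 - γ) * Real.exp (-x) := this
    · exact exp_neg_int.const_mul _
    · -- pointwise limit
      have hone : (volume.restrict (Ioi (0:ℝ))) {(1:ℝ)} = 0 := by
        simp [Measure.restrict_apply', measurableSet_Ioi]
      have hne : ∀ᵐ x ∂(volume.restrict (Ioi (0:ℝ))), x ≠ (1:ℝ) := by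
        rw [ae_iff]
        simpa using hone
      filter_upwards [ae_restrict_mem measurableSet_Ioi, hne] with x hx hx1
      have hx0 : (0:ℝ) < x := hx
      rcases lt_or_gt_of_ne hx1 with hlt | hgt
      · -- x < 1 : limit h γ
        have hxt : Tendsto (fun a : ℝ => x ^ (1 / (a + 1))) (𝓝[>] (-1)) (𝓝 0) :=
          (tendsto_rpow_atTop_of_base_lt_one x (by linarith) hlt).comp hptend
        have hxt2 : Tendsto (fun a : ℝ => x ^ (1 / (a + 1)) + γ) (𝓝[>] (-1)) (𝓝 γ) := by
          simpa using hxt.add tendsto_const_nhds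
        have := (hcont γ le_rfl).tendsto.comp hxt2
        have hfx : f x = h γ := by
          rw [hf, indicator_of_mem (by exact ⟨hx0, hlt⟩ : x ∈ Ioo (0:ℝ) 1)]
        rw [hfx]; exact this
      · -- x > 1 : limit 0
        have hxt : Tendsto (fun a : ℝ => x ^ (1 / (a + 1))) (𝓝[>] (-1)) atTop := by
          have hbase : Tendsto (fun y : ℝ => x ^ y) atTop atTop := by
            have hlog : 0 < Real.log x := Real.log_pos hgt
            simp_rw [Real.rpow_def_of_pos hx0]
            exact Real.tendsto_exp_atTop.comp
              (Tendsto.const_mul_atTop hlog tendsto_id)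
          exact hbase.comp hptend
        have hxt2 : Tendsto (fun a : ℝ => x ^ (1 / (a + 1)) + γ) (𝓝[>] (-1)) atTop :=
          tendsto_atTop_add_const_right _ γ hxt
        have hzero : Tendsto h atTop (𝓝 0) := by
          refine squeeze_zero_norm' (a := fun s => C * Real.exp (-s)) ?_ ?_
          · filter_upwards [Filter.eventually_ge_atTop γ] with s hs
            exact hbound s hs
          · simpa using (tendsto_exp_neg_atTop_nhds_zero).const_mul C
        have := hzero.comp hxt2
        have hfx : f x = 0 := by
          rw [hf, indicator_of_notMem (by simp [mem_Ioo]; intro _; linarith)]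
        rw [hfx]; exact this
  -- combine
  apply htendF.congr'
  filter_upwards [self_mem_nhdsWithin] with a ha
  exact (heq a (mem_Ioi.1 ha)).symm

/-- As `a → -1⁺` the ratio `r(γ, a)` recovers the monatomic (Synge) value
`γ K₃(γ)/K₂(γ) - 1`. -/
theorem rRatio_monatomic_limit (γ : ℝ) (hγ : 0 < γ) :
    Filter.Tendsto (fun a : ℝ => rRatio γ a) (nhdsWithin (-1) (Set.Ioi (-1)))
      (nhds (γ * besselK 3 γ / besselK 2 γ - 1)) := by
  have hK2 : 0 < besselK 2 γ := besselK_pos 2 hγ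
  have hK3 : 0 < besselK 3 γ := besselK_pos 3 hγ
  -- generic decay bound for besselK n
  have hdecay : ∀ n : ℕ, ∀ s, γ ≤ s →
      besselK n s ≤ (Real.exp γ * besselK n γ) * Real.exp (-s) := by
    intro n s hs
    have := besselK_le_exp_mul n hγ hs
    rw [Real.exp_sub] at this
    calc besselK n s ≤ Real.exp γ / Real.exp s * besselK n γ := this
      _ = (Real.exp γ * besselK n γ) * Real.exp (-s) := by
          rw [Real.exp_neg]; field_simp
  have hKnonneg : ∀ n : ℕ, ∀ s, γ ≤ s → 0 ≤ besselK n s :=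
    fun n s hs => (besselK_pos n (lt_of_lt_of_le hγ hs)).le
  -- numerator function
  set h₁ : ℝ → ℝ := fun s => besselK 3 s - besselK 2 s / s with hh₁
  set h₂ : ℝ → ℝ := fun s => besselK 2 s / s with hh₂
  have hcont₂ : ∀ x, γ ≤ x → ContinuousAt h₂ x := by
    intro x hx
    have hx0 : 0 < x := lt_of_lt_of_le hγ hx
    exact (besselK_continuousAt 2 hx0).div continuousAt_id hx0.ne'
  have hcont₁ : ∀ x, γ ≤ x → ContinuousAt h₁ x := by
    intro x hx
    exact ((besselK_continuousAt 3 (lt_of_lt_of_le hγ hx)).sub (hcont₂ x hx))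
  have hb₂ : ∀ s, γ ≤ s → |h₂ s| ≤ (Real.exp γ * (besselK 2 γ / γ)) * Real.exp (-s) := by
    intro s hs
    have hs0 : 0 < s := lt_of_lt_of_le hγ hs
    have h2s := hKnonneg 2 s hs
    have hd := hdecay 2 s hs
    rw [hh₂, abs_of_nonneg (by positivity)]
    calc besselK 2 s / s ≤ ((Real.exp γ * besselK 2 γ) * Real.exp (-s)) / γ := by
          gcongr
      _ = (Real.exp γ * (besselK 2 γ / γ)) * Real.exp (-s) := by ring
  have hb₁ : ∀ s, γ ≤ s →
      |h₁ s| ≤ (Real.exp γ * (besselK 3 γ + besselK 2 γ / γ)) * Real.exp (-s) := by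
    intro s hs
    have hs0 : 0 < s := lt_of_lt_of_le hγ hs
    have h2s := hKnonneg 2 s hs
    have h3s := hKnonneg 3 s hs
    have hd3 := hdecay 3 s hs
    have hb2 := hb₂ s hs
    rw [hh₂, abs_of_nonneg (by positivity)] at hb2
    have hB : (0:ℝ) ≤ besselK 2 s / s := by positivity
    have htri : |h₁ s| ≤ besselK 3 s + besselK 2 s / s := by
      rw [hh₁]
      exact abs_le.2 ⟨by nlinarith, by nlinarith⟩
    have : besselK 3 s + besselK 2 s / s ≤
        (Real.exp γ * (besselK 3 γ + besselK 2 γ / γ)) * Real.exp (-s) := by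
      have : (Real.exp γ * (besselK 3 γ + besselK 2 γ / γ)) * Real.exp (-s)
          = (Real.exp γ * besselK 3 γ) * Real.exp (-s)
            + (Real.exp γ * (besselK 2 γ / γ)) * Real.exp (-s) := by ring
      rw [this]
      exact add_le_add hd3 hb2
    linarith
  have T₁ := tendsto_key hγ hcont₁ hb₁
  have T₂ := tendsto_key hγ hcont₂ hb₂
  have hne : h₂ γ ≠ 0 := by
    have : h₂ γ = besselK 2 γ / γ := rfl
    rw [this]; positivity
  have T := T₁.div T₂ hne
  have hval : h₁ γ / h₂ γ = γ * besselK 3 γ / besselK 2 γ - 1 := by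
    rw [hh₁, hh₂]
    field_simp
  rw [hval] at T
  apply T.congr'
  filter_upwards [self_mem_nhdsWithin] with a ha
  have ha1 : a + 1 ≠ 0 := by have := mem_Ioi.1 ha; intro hc; linarith [hc]
  rw [rRatio]
  simp only [Pi.div_apply]
  rw [mul_div_mul_left _ _ ha1]
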